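/- arXiv:2510.16181 — 3 statements merged into one kernel-verified Lean document; each statement's English description precedes it below -/
import Mathlib

section
/- Let n ≥ 3 and let ε be a nonempty collection of 3-element subsets of {1,…,n} satisfying the PEUR (principle of existence and uniqueness of the replacer): for every σ ∈ ε and every k ∈ {1,…,n}, there exists a unique k' ∈ σ such that (σ \ {k'}) ∪ {k} ∈ ε. Suppose the coordinates 1 and 2 are indispensable, i.e., every σ ∈ ε contains both 1 and 2. Then ε = { {1,2,j} : j ∈ {3,…,n} }. -/
lemma shape_aux (n : ℕ) (s : Finset ℕ) (hc : s.card = 3) (h1 : 1 ∈ s) (h2 : 2 ∈ s)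
    (hs : s ⊆ Finset.Icc 1 n) : ∃ j, 3 ≤ j ∧ j ≤ n ∧ s = {1, 2, j} := by
  have hsub : ({1, 2} : Finset ℕ) ⊆ s := by
    intro x hx; simp at hx; rcases hx with rfl | rfl <;> assumption
  have hcd : (s \ {1, 2}).card = 1 := by
    rw [Finset.card_sdiff_of_subset hsub, hc]; rfl
  obtain ⟨j, hj⟩ := Finset.card_eq_one.mp hcd
  have hjs : j ∈ s \ ({1, 2} : Finset ℕ) := by rw [hj]; simp
  simp only [Finset.mem_sdiff, Finset.mem_insert, Finset.mem_singleton] at hjs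
  obtain ⟨hjm, hne⟩ := hjs
  have hj1 : j ≠ 1 := fun h => hne (Or.inl h)
  have hj2 : j ≠ 2 := fun h => hne (Or.inr h)
  have hjn := Finset.mem_Icc.mp (hs hjm)
  refine ⟨j, ?_, hjn.2, ?_⟩
  · omega
  · have : s = {1, 2} ∪ s \ {1, 2} := by
      rw [Finset.union_sdiff_of_subset hsub]
    rw [this, hj]
    ext x; simp [Finset.mem_insert, Finset.mem_singleton]

theorem stmt_0 (n : ℕ) (hn : 3 ≤ n) (ε : Finset (Finset ℕ))
    (hne : ε.Nonempty)
    (hsub : ∀ σ ∈ ε, σ ⊆ Finset.Icc 1 n)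
    (hcard : ∀ σ ∈ ε, σ.card = 3)
    (hPEUR : ∀ σ ∈ ε, ∀ k ∈ Finset.Icc 1 n,
      ∃! k', k' ∈ σ ∧ (σ.erase k' ∪ {k}) ∈ ε)
    (hind : ∀ σ ∈ ε, 1 ∈ σ ∧ 2 ∈ σ) :
    ε = (Finset.Icc 3 n).image (fun j => ({1, 2, j} : Finset ℕ)) := by
  obtain ⟨σ₀, hσ₀⟩ := hne
  obtain ⟨j₀, hj₀3, hj₀n, hσ₀eq⟩ :=
    shape_aux n σ₀ (hcard σ₀ hσ₀) (hind σ₀ hσ₀).1 (hind σ₀ hσ₀).2 (hsub σ₀ hσ₀)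
  ext τ
  simp only [Finset.mem_image, Finset.mem_Icc]
  constructor
  · intro hτ
    obtain ⟨j, hj3, hjn, heq⟩ :=
      shape_aux n τ (hcard τ hτ) (hind τ hτ).1 (hind τ hτ).2 (hsub τ hτ)
    exact ⟨j, ⟨hj3, hjn⟩, heq.symm⟩
  · rintro ⟨k, ⟨hk3, hkn⟩, rfl⟩
    have hkI : k ∈ Finset.Icc 1 n := Finset.mem_Icc.mpr ⟨by omega, hkn⟩
    obtain ⟨k', ⟨⟨hk'σ, hk'ε⟩, _⟩⟩ := hPEUR σ₀ hσ₀ k hkI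
    rw [hσ₀eq] at hk'σ hk'ε
    simp only [Finset.mem_insert, Finset.mem_singleton] at hk'σ
    have h12 : (1 : ℕ) ∈ ({1, 2, j₀} : Finset ℕ).erase k' ∪ {k} ∧
        (2 : ℕ) ∈ ({1, 2, j₀} : Finset ℕ).erase k' ∪ {k} := hind _ hk'ε
    rcases hk'σ with rfl | rfl | rfl
    · exfalso
      have := h12.1
      simp only [Finset.mem_union, Finset.mem_erase, Finset.mem_insert,
        Finset.mem_singleton] at this
      omega
    · exfalso
      have := h12.2
      simp only [Finset.mem_union, Finset.mem_erase, Finset.mem_insert,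
        Finset.mem_singleton] at this
      omega
    · have heq : ({1, 2, k'} : Finset ℕ).erase k' ∪ {k} = {1, 2, k} := by
        ext x
        simp only [Finset.mem_union, Finset.mem_erase, Finset.mem_insert,
          Finset.mem_singleton]
        omega
      rwa [heq] at hk'ε
end

section
/- Let m ≥ 1 and n = 2m+2, and let ε be a fundamental set of (2m+1)-subsets of {1,…,n} satisfying PEUR, with coordinates 1,…,m+1 indispensable and |ε| ≥ 2. Then |ε| = 2. -/
theorem stmt_10 (m n : ℕ) (hm : 1 ≤ m) (hn : n = 2 * m + 2)
    (ε : Finset (Finset ℕ)) (hne : ε.Nonempty)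
    (hsub : ∀ σ ∈ ε, σ ⊆ Finset.Icc 1 n)
    (hcard : ∀ σ ∈ ε, σ.card = 2 * m + 1)
    (hPEUR : ∀ σ ∈ ε, ∀ k ∈ Finset.Icc 1 n,
      ∃! k', k' ∈ σ ∧ (σ.erase k' ∪ {k}) ∈ ε)
    (hind : ∀ σ ∈ ε, Finset.Icc 1 (m + 1) ⊆ σ)
    (hge : 2 ≤ ε.card) :
    ε.card = 2 := by
  -- every element of ε is Icc 1 n minus a single point
  have hIcc : (Finset.Icc 1 n).card = n := by simp
  have key : ∀ σ ∈ ε, ∃ a ∈ Finset.Icc 1 n, σ = (Finset.Icc 1 n).erase a := by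
    intro σ hσ
    have h1 : ((Finset.Icc 1 n) \ σ).card = 1 := by
      rw [Finset.card_sdiff_of_subset (hsub σ hσ), hIcc, hcard σ hσ]; omega
    obtain ⟨a, ha⟩ := Finset.card_eq_one.mp h1
    have haIn : a ∈ Finset.Icc 1 n ∧ a ∉ σ := by
      have := ha ▸ (Finset.mem_singleton_self a)
      exact Finset.mem_sdiff.mp this
    refine ⟨a, haIn.1, ?_⟩
    ext x
    simp only [Finset.mem_erase]
    constructor
    · intro hx
      refine ⟨fun h => haIn.2 (h ▸ hx), hsub σ hσ hx⟩
    · rintro ⟨hxa, hxI⟩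
      by_contra hxσ
      have : x ∈ (Finset.Icc 1 n) \ σ := Finset.mem_sdiff.mpr ⟨hxI, hxσ⟩
      rw [ha, Finset.mem_singleton] at this
      exact hxa this
  by_contra hne2
  have h3 : 3 ≤ ε.card := by omega
  -- extract three distinct elements
  obtain ⟨σ₁, hσ₁⟩ := hne
  have h2' : 2 ≤ (ε.erase σ₁).card := by
    rw [Finset.card_erase_of_mem hσ₁]; omega
  obtain ⟨σ₂, hσ₂'⟩ := Finset.card_pos.mp (by omega : 0 < (ε.erase σ₁).card)
  have h1' : 1 ≤ ((ε.erase σ₁).erase σ₂).card := by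
    rw [Finset.card_erase_of_mem hσ₂']; omega
  obtain ⟨σ₃, hσ₃'⟩ := Finset.card_pos.mp (by omega : 0 < ((ε.erase σ₁).erase σ₂).card)
  have hσ₂ : σ₂ ∈ ε := Finset.mem_of_mem_erase hσ₂'
  have hσ₃ : σ₃ ∈ ε := Finset.mem_of_mem_erase (Finset.mem_of_mem_erase hσ₃')
  have h12 : σ₂ ≠ σ₁ := Finset.ne_of_mem_erase hσ₂'
  have h23 : σ₃ ≠ σ₂ := Finset.ne_of_mem_erase hσ₃'
  have h13 : σ₃ ≠ σ₁ := Finset.ne_of_mem_erase (Finset.mem_of_mem_erase hσ₃')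
  obtain ⟨a₁, ha₁, e₁⟩ := key σ₁ hσ₁
  obtain ⟨a₂, ha₂, e₂⟩ := key σ₂ hσ₂
  obtain ⟨a₃, ha₃, e₃⟩ := key σ₃ hσ₃
  have a12 : a₁ ≠ a₂ := fun h => h12 (by rw [e₁, e₂, h])
  have a13 : a₁ ≠ a₃ := fun h => h13 (by rw [e₁, e₃, h])
  have a23 : a₂ ≠ a₃ := fun h => h23 (by rw [e₂, e₃, h])
  obtain ⟨k', hk', huniq⟩ := hPEUR σ₁ hσ₁ a₁ ha₁
  have main : ∀ b, b ∈ Finset.Icc 1 n → b ≠ a₁ →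
      σ₁.erase b ∪ {a₁} = (Finset.Icc 1 n).erase b := by
    intro b hbI hba
    ext x
    simp only [e₁, Finset.mem_union, Finset.mem_erase, Finset.mem_singleton]
    constructor
    · rintro (⟨hxb, _, hxI⟩ | rfl)
      · exact ⟨hxb, hxI⟩
      · exact ⟨fun h => hba h.symm, ha₁⟩
    · rintro ⟨hxb, hxI⟩
      by_cases hx1 : x = a₁
      · right; exact hx1
      · left; exact ⟨hxb, hx1, hxI⟩
  have mem₁ : ∀ b, b ∈ Finset.Icc 1 n → b ≠ a₁ → b ∈ σ₁ := by
    intro b hbI hba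
    rw [e₁]; exact Finset.mem_erase.mpr ⟨hba, hbI⟩
  have p2 : a₂ ∈ σ₁ ∧ (σ₁.erase a₂ ∪ {a₁}) ∈ ε := by
    refine ⟨mem₁ a₂ ha₂ a12.symm, ?_⟩
    rw [main a₂ ha₂ a12.symm, ← e₂]; exact hσ₂
  have p3 : a₃ ∈ σ₁ ∧ (σ₁.erase a₃ ∪ {a₁}) ∈ ε := by
    refine ⟨mem₁ a₃ ha₃ a13.symm, ?_⟩
    rw [main a₃ ha₃ a13.symm, ← e₃]; exact hσ₃
  exact a23 ((huniq a₂ p2).trans (huniq a₃ p3).symm)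
end

section
/- Let m = 1, n ≥ 4, and let ε be a fundamental set of 3-subsets of {1,…,n} in which exactly three coordinates, say 1, 2, 3, are indispensable. Then ε = {{1,2,3}} and ε does not satisfy PEUR. -/
theorem stmt_11 (n : ℕ) (hn : 4 ≤ n) (ε : Finset (Finset ℕ))
    (hne : ε.Nonempty)
    (hsub : ∀ σ ∈ ε, σ ⊆ Finset.Icc 1 n)
    (hcard : ∀ σ ∈ ε, σ.card = 3)
    (hind : ∀ σ ∈ ε, ({1, 2, 3} : Finset ℕ) ⊆ σ) :
    ε = {({1, 2, 3} : Finset ℕ)} ∧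
    ¬ (∀ σ ∈ ε, ∀ k ∈ Finset.Icc 1 n,
      ∃! k', k' ∈ σ ∧ (σ.erase k' ∪ {k}) ∈ ε) := by
  have heq : ∀ σ ∈ ε, σ = ({1, 2, 3} : Finset ℕ) := by
    intro σ hσ
    refine (Finset.eq_of_subset_of_card_le (hind σ hσ) ?_).symm
    rw [hcard σ hσ]
    decide
  have hε : ε = {({1, 2, 3} : Finset ℕ)} := by
    obtain ⟨σ, hσ⟩ := hne
    apply Finset.eq_singleton_iff_nonempty_unique_mem.2
    exact ⟨⟨σ, hσ⟩, heq⟩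
  refine ⟨hε, ?_⟩
  intro h
  have h123 : ({1, 2, 3} : Finset ℕ) ∈ ε := by rw [hε]; simp
  have h4 : (4 : ℕ) ∈ Finset.Icc 1 n := by
    simp [Finset.mem_Icc]; omega
  obtain ⟨k', ⟨hk', hmem⟩, _⟩ := h _ h123 4 h4
  have := heq _ hmem
  have h4in : (4 : ℕ) ∈ (({1,2,3} : Finset ℕ).erase k' ∪ {4}) := by simp
  rw [this] at h4in
  simp at h4in
end
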